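/- arXiv:1211.0337 — 8 statements merged into one kernel-verified Lean document; each statement's English description precedes it below -/
import Mathlib

section
/- Let β₁, …, β_N be distinct real numbers, c₁, …, c_N complex numbers, and E ⊆ ℝ a set of positive Lebesgue measure. If for every x ∈ E we have ∑_{k=1}^N c_k e^{2πi β_k x} = 0, then c₁ = c₂ = ⋯ = c_N = 0. -/
open MeasureTheory Real

lemma exp_coeffs_zero (N : ℕ) (β : Fin N → ℝ) (hβ : Function.Injective β) (c : Fin N → ℂ)
    (h : ∀ x : ℝ, ∑ k, c k * Complex.exp (2 * π * Complex.I * (β k) * x) = 0) :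
    ∀ k, c k = 0 := by
  classical
  let φ : Fin N → (Multiplicative ℝ →* ℂ) := fun k =>
    { toFun := fun x => Complex.exp (2 * π * Complex.I * β k * (Multiplicative.toAdd x))
      map_one' := by simp
      map_mul' := fun x y => by
        simp [mul_add, Complex.exp_add] }
  have hinj : Function.Injective φ := by
    intro j k hjk
    by_contra hne
    have hb : β j ≠ β k := fun hb => hne (hβ hb)
    have hsub : β j - β k ≠ 0 := sub_ne_zero.mpr hb
    have := congrArg (fun f : Multiplicative ℝ →* ℂ =>
      f (Multiplicative.ofAdd (1 / (2 * (β j - β k))))) hjk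
    simp only [φ, MonoidHom.coe_mk, OneHom.coe_mk, toAdd_ofAdd] at this
    rw [Complex.exp_eq_exp_iff_exists_int] at this
    obtain ⟨n, hn⟩ := this
    have hπ : (π : ℂ) ≠ 0 := Complex.ofReal_ne_zero.mpr pi_ne_zero
    have hsubC : ((β j : ℂ) - β k) ≠ 0 := by
      rw [← Complex.ofReal_sub]
      exact Complex.ofReal_ne_zero.mpr hsub
    push_cast at hn
    field_simp at hn
    have h2πI : (2 * (π:ℂ) * Complex.I) ≠ 0 := by
      simp [hπ, Complex.I_ne_zero]
    have key : (2 * (n:ℂ)) * ((β j : ℂ) - β k) = 1 * ((β j : ℂ) - β k) := by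
      apply mul_left_cancel₀ h2πI
      linear_combination (-(2 * (π:ℂ) * Complex.I)) * hn
    have h2n : (2 * (n:ℂ)) = 1 := mul_right_cancel₀ hsubC key
    have : (2 * n : ℤ) = 1 := by exact_mod_cast h2n
    omega
  have hli : LinearIndependent ℂ (fun k => ⇑(φ k)) :=
    (linearIndependent_monoidHom (Multiplicative ℝ) ℂ).comp φ hinj
  have hsum : ∑ k, c k • (⇑(φ k) : Multiplicative ℝ → ℂ) = 0 := by
    funext x
    simpa [φ] using h (Multiplicative.toAdd x)
  exact fun k => (Fintype.linearIndependent_iff.mp hli) c hsum k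

theorem trig_poly_linear_independence (N : ℕ) (β : Fin N → ℝ)
    (hβ : Function.Injective β) (c : Fin N → ℂ) (E : Set ℝ)
    (hE : 0 < volume E)
    (h : ∀ x ∈ E, ∑ k, c k * Complex.exp (2 * π * Complex.I * (β k) * x) = 0) :
    ∀ k, c k = 0 := by
  classical
  set f : ℝ → ℂ := fun x => ∑ k, c k * Complex.exp (2 * π * Complex.I * (β k) * x) with hf
  -- f is analytic on ℝ
  have hfa : AnalyticOnNhd ℝ f Set.univ := by
    rw [show f = ∑ k, fun x : ℝ => c k * Complex.exp (2 * π * Complex.I * (β k) * x) from by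
      ext x; simp [f, Finset.sum_apply]]
    apply Finset.analyticOnNhd_sum
    intro k _
    intro x _
    have h1 : AnalyticAt ℂ (fun z : ℂ => c k * Complex.exp (2 * π * Complex.I * (β k) * z))
        ((x : ℝ) : ℂ) := by
      apply AnalyticAt.mul
      · exact analyticAt_const
      · exact (analyticAt_const.mul analyticAt_id).cexp
    exact (h1.restrictScalars).comp (Complex.ofRealCLM.analyticAt x)
  -- find a bounded piece of E with positive measure
  have hcover : E ⊆ ⋃ n : ℕ, E ∩ Set.Icc (-(n : ℝ)) n := by
    intro x hx
    obtain ⟨n, hn⟩ := exists_nat_ge |x|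
    exact Set.mem_iUnion.mpr ⟨n, hx, abs_le.mp hn⟩
  obtain ⟨n, hn⟩ : ∃ n : ℕ, 0 < volume (E ∩ Set.Icc (-(n : ℝ)) n) := by
    by_contra hc
    push_neg at hc
    simp only [le_zero_iff] at hc
    have : volume E = 0 :=
      measure_mono_null hcover (measure_iUnion_null hc)
    exact absurd this hE.ne'
  set S := E ∩ Set.Icc (-(n : ℝ)) n with hS
  have hSinf : S.Infinite := by
    intro hfin
    exact absurd (hfin.measure_zero volume) hn.ne'
  obtain ⟨x₀, hx₀K, hx₀⟩ := hSinf.exists_accPt_of_subset_isCompact isCompact_Icc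
    Set.inter_subset_right
  have hfreq : ∃ᶠ z in nhdsWithin x₀ {x₀}ᶜ, f z = 0 := by
    have h1 := accPt_iff_frequently.mp hx₀
    rw [frequently_nhdsWithin_iff]
    exact h1.mono fun z hz => ⟨h z hz.2.1, hz.1⟩
  have hzero : Set.EqOn f 0 Set.univ :=
    hfa.eqOn_zero_of_preconnected_of_frequently_eq_zero isPreconnected_univ
      (Set.mem_univ x₀) hfreq
  exact exp_coeffs_zero N β hβ c (fun x => hzero (Set.mem_univ x))
end

section
/- Let g ∈ L²(ℝ) and suppose that for every α > 0 the ratio-limit l_g(α) = lim_{x→∞} g(x+α)/g(x) exists and is finite. Then |l_g(α)| ≤ 1 for every α > 0. -/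
open Filter MeasureTheory

theorem ratio_limit_norm_le_one (g : ℝ → ℂ) (hg : MemLp g 2 volume)
    (l : ℝ → ℂ)
    (hl : ∀ α > 0, Tendsto (fun x => g (x + α) / g x) atTop (nhds (l α))) :
    ∀ α > 0, ‖l α‖ ≤ 1 := by
  intro α hα
  by_contra h
  push_neg at h
  set c : ℝ := (1 + ‖l α‖) / 2 with hc
  have hc1 : 1 < c := by rw [hc]; linarith
  have hcl : c < ‖l α‖ := by rw [hc]; linarith
  -- eventually the ratio norm is ≥ c
  have hev : ∀ᶠ x in atTop, c ≤ ‖g (x + α) / g x‖ :=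
    ((hl α hα).norm).eventually (eventually_ge_nhds hcl)
  obtain ⟨X, hX⟩ := eventually_atTop.mp hev
  -- basic consequence: for x ≥ X, g x ≠ 0 and ‖g (x+α)‖ ≥ c * ‖g x‖
  have hne : ∀ x, X ≤ x → g x ≠ 0 := by
    intro x hx hx0
    have := hX x hx
    rw [hx0, div_zero, norm_zero] at this
    linarith
  have hstep : ∀ x, X ≤ x → c * ‖g x‖ ≤ ‖g (x + α)‖ := by
    intro x hx
    have h0 : 0 < ‖g x‖ := norm_pos_iff.mpr (hne x hx)
    have := hX x hx
    rw [norm_div, le_div_iff₀ h0] at this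
    linarith
  -- iterate
  have hiter : ∀ n : ℕ, ∀ x, X ≤ x → c ^ n * ‖g x‖ ≤ ‖g (x + n * α)‖ := by
    intro n
    induction n with
    | zero => intro x hx; simp
    | succ n ih =>
      intro x hx
      have h1 : X ≤ x + n * α := by
        have : (0:ℝ) ≤ n * α := by positivity
        linarith
      have h2 := hstep (x + n * α) h1
      have h3 := ih x hx
      have h4 : x + n * α + α = x + (n + 1 : ℕ) * α := by push_cast; ring
      rw [h4] at h2
      calc c ^ (n+1) * ‖g x‖ = c * (c ^ n * ‖g x‖) := by ring
        _ ≤ c * ‖g (x + n * α)‖ := by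
            apply mul_le_mul_of_nonneg_left h3 (by linarith)
        _ ≤ ‖g (x + (n+1:ℕ) * α)‖ := h2
  -- the squared norm function
  set φ : ℝ → ℝ := fun x => ‖g x‖ ^ 2 with hφ
  have hφint : Integrable φ volume := by
    have := hg.integrable_norm_rpow two_ne_zero ENNReal.ofNat_ne_top
    refine this.congr (Eventually.of_forall fun x => ?_)
    rw [ENNReal.toReal_ofNat]
    simp only [hφ]
    rw [show ((2:ℝ)) = ((2:ℕ):ℝ) by norm_num, Real.rpow_natCast]
  have hφnn : ∀ x, 0 ≤ φ x := fun x => sq_nonneg _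
  set C : ℝ := ∫ x, φ x with hC
  -- F > 0
  set F : ℝ := ∫ x in X..(X + α), φ x with hF
  have hFpos : 0 < F := by
    apply intervalIntegral.intervalIntegral_pos_of_pos_on
      hφint.intervalIntegrable
    · intro x hx
      have : g x ≠ 0 := hne x (le_of_lt hx.1)
      exact pow_pos (norm_pos_iff.mpr this) 2
    · linarith
  -- for each n, c^(2n) * F ≤ C
  have hkey : ∀ n : ℕ, (c ^ 2) ^ n * F ≤ C := by
    intro n
    have hshiftint : Integrable (fun x => φ (x + n * α)) volume :=
      hφint.comp_add_right _
    have h1 : (c ^ 2) ^ n * F ≤ ∫ x in X..(X + α), φ (x + n * α) := by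
      rw [hF, ← intervalIntegral.integral_const_mul]
      apply intervalIntegral.integral_mono_on (by linarith)
        (hφint.const_mul _).intervalIntegrable
        hshiftint.intervalIntegrable
      intro x hx
      have := hiter n x hx.1
      have h0 : 0 ≤ ‖g x‖ := norm_nonneg _
      have hcn : (0:ℝ) ≤ c ^ n := by positivity
      calc (c ^ 2) ^ n * φ x = (c ^ n * ‖g x‖) ^ 2 := by
            simp only [hφ]
            rw [mul_pow, ← pow_mul, ← pow_mul, Nat.mul_comm 2 n]
        _ ≤ ‖g (x + n * α)‖ ^ 2 := by
            apply pow_le_pow_left₀ (by positivity) this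
        _ = φ (x + n * α) := rfl
    have h2 : (∫ x in X..(X + α), φ (x + n * α)) ≤ C := by
      rw [intervalIntegral.integral_comp_add_right]
      rw [intervalIntegral.integral_of_le (by linarith : X + n*α ≤ X + α + n*α)]
      exact setIntegral_le_integral hφint (Eventually.of_forall hφnn)
    linarith
  -- contradiction
  have hc2 : 1 < c ^ 2 := by nlinarith
  obtain ⟨n, hn⟩ := pow_unbounded_of_one_lt (C / F) hc2
  have : C / F < (c ^ 2) ^ n := hn
  have h1 : C < (c ^ 2) ^ n * F := (div_lt_iff₀ hFpos).mp this
  linarith [hkey n]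
end

section
/- Let g ∈ L²(ℝ) and suppose that for every α > 0 the ratio-limit l_g(α) exists and is finite. Then there exists a real number a with 0 ≤ a ≤ 1 such that |l_g(α)| = a^α for every α > 0. -/
open Filter MeasureTheory

lemma funeq_aux (h : ℝ → ℝ)
    (hmul : ∀ α > 0, ∀ β > 0, h (α + β) = h α * h β)
    (hnn : ∀ α > 0, 0 ≤ h α) (hle : ∀ α > 0, h α ≤ 1) :
    ∃ a : ℝ, 0 ≤ a ∧ a ≤ 1 ∧ ∀ α > 0, h α = a ^ α := by
  by_cases hzero : ∃ α₀ > 0, h α₀ = 0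
  · obtain ⟨α₀, hα₀, h0⟩ := hzero
    -- h (α₀ / 2^n) = 0 for all n
    have key : ∀ n : ℕ, h (α₀ / 2 ^ n) = 0 := by
      intro n
      induction n with
      | zero => simpa using h0
      | succ k ih =>
        have hp : 0 < α₀ / 2 ^ (k + 1) := by positivity
        have : h (α₀ / 2 ^ (k + 1) + α₀ / 2 ^ (k + 1)) = h (α₀ / 2 ^ (k + 1)) * h (α₀ / 2 ^ (k + 1)) :=
          hmul _ hp _ hp
        have he : α₀ / 2 ^ (k + 1) + α₀ / 2 ^ (k + 1) = α₀ / 2 ^ k := by ring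
        rw [he, ih] at this
        exact mul_self_eq_zero.mp this.symm
    refine ⟨0, le_refl 0, zero_le_one, fun α hα => ?_⟩
    obtain ⟨n, hn⟩ := pow_unbounded_of_one_lt (α₀ / α) (y := (2:ℝ)) one_lt_two
    have h2n : (0:ℝ) < 2 ^ n := by positivity
    have hlt : α₀ / 2 ^ n < α := by
      rw [div_lt_iff₀ h2n]
      rw [div_lt_iff₀ hα] at hn
      linarith [hn]
    have hp : 0 < α₀ / 2 ^ n := by positivity
    have : h ((α - α₀ / 2 ^ n) + α₀ / 2 ^ n) = h (α - α₀ / 2 ^ n) * h (α₀ / 2 ^ n) :=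
      hmul _ (by linarith) _ hp
    rw [sub_add_cancel, key n, mul_zero] at this
    rw [this, Real.zero_rpow (ne_of_gt hα)]
  · push_neg at hzero
    have hpos : ∀ α > 0, 0 < h α := fun α hα =>
      lt_of_le_of_ne (hnn α hα) (Ne.symm (hzero α hα))
    set f : ℝ → ℝ := fun α => Real.log (h α) with hf
    have fadd : ∀ α > 0, ∀ β > 0, f (α + β) = f α + f β := by
      intro α hα β hβ
      simp only [hf, hmul α hα β hβ]
      exact Real.log_mul (ne_of_gt (hpos α hα)) (ne_of_gt (hpos β hβ))
    have fnp : ∀ α > 0, f α ≤ 0 := fun α hα => Real.log_nonpos (hnn α hα) (hle α hα)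
    -- f (n * α) = n * f α for n ≥ 1
    have fnat : ∀ n : ℕ, ∀ α > 0, f ((n + 1) * α) = (n + 1) * f α := by
      intro n
      induction n with
      | zero => intro α hα; simp
      | succ k ih =>
        intro α hα
        have he : ((k:ℝ) + 1 + 1) * α = ((k:ℝ) + 1) * α + α := by ring
        push_cast
        rw [he, fadd _ (by positivity) _ hα, ih α hα]
        ring
    have fnat' : ∀ n : ℕ, 0 < n → ∀ α > 0, f (n * α) = n * f α := by
      intro n hn α hα
      obtain ⟨k, rfl⟩ := Nat.exists_eq_add_of_lt hn
      simpa [add_comm] using fnat k α hα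
    -- f q = q * f 1 for positive rationals
    have frat : ∀ q : ℚ, 0 < q → f q = (q : ℝ) * f 1 := by
      intro q hq
      have hnum : 0 < q.num := Rat.num_pos.mpr hq
      set p : ℕ := q.num.toNat with hp
      have hpp : 0 < p := by omega
      have hd : 0 < q.den := q.den_pos
      have hqr : (q : ℝ) = (p : ℝ) / (q.den : ℝ) := by
        rw [Rat.cast_def]; congr 1
        exact_mod_cast congrArg (Int.cast : ℤ → ℝ) (Int.toNat_of_nonneg hnum.le).symm
      have hqpos : (0:ℝ) < (q:ℝ) := by exact_mod_cast hq
      have h1 : f ((q.den : ℝ) * (q:ℝ)) = (q.den : ℝ) * f q := fnat' q.den hd _ hqpos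
      have h2 : (q.den : ℝ) * (q : ℝ) = (p : ℝ) := by
        rw [hqr, mul_div_cancel₀]
        exact_mod_cast hd.ne'
      have h3 : f ((p : ℝ) * 1) = (p:ℝ) * f 1 := fnat' p hpp 1 one_pos
      rw [mul_one] at h3
      rw [h2, h3] at h1
      have hdne : (q.den : ℝ) ≠ 0 := by exact_mod_cast hd.ne'
      have h5 : f (q:ℝ) = (p:ℝ) * f 1 / (q.den : ℝ) := by
        field_simp
        linarith
      rw [h5, hqr]; ring
    have fanti : ∀ α > 0, ∀ β, α < β → f β ≤ f α := by
      intro α hα β hab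
      have : f β = f α + f (β - α) := by
        have := fadd α hα (β - α) (by linarith)
        rwa [add_sub_cancel] at this
      have := fnp (β - α) (by linarith)
      linarith [fadd α hα (β - α) (by linarith), fnp (β - α) (by linarith)]
    have f1np : f 1 ≤ 0 := fnp 1 one_pos
    -- f α = α * f 1
    have flin : ∀ α > 0, f α = α * f 1 := by
      intro α hα
      rcases eq_or_lt_of_le f1np with h1z | h1neg
      · -- f 1 = 0
        have hub : f α ≤ 0 := fnp α hα
        have : ∃ n : ℕ, α < n := exists_nat_gt α
        obtain ⟨n, hn⟩ := this
        have hn0 : 0 < n := by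
          by_contra hc
          push_neg at hc
          interval_cases n <;> simp_all <;> linarith
        have : f n = n * f 1 := by
          have := fnat' n hn0 1 one_pos
          simpa using this
        have hlb : f ((n:ℝ)) ≤ f α := fanti α hα n hn
        rw [this, h1z, mul_zero] at hlb
        rw [h1z, mul_zero]
        linarith
      · -- f 1 < 0
        have hnf1 : 0 < -(f 1) := by linarith
        refine le_antisymm ?_ ?_
        · refine le_of_forall_pos_le_add fun ε hε => ?_
          set δ : ℝ := min (α / 2) (ε / (-(f 1))) with hδ
          have hδpos : 0 < δ := lt_min (by linarith) (by positivity)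
          obtain ⟨r, hr1, hr2⟩ := exists_rat_btwn (show α - δ < α by linarith)
          have hrpos : (0:ℝ) < (r:ℝ) := by
            have : δ ≤ α / 2 := min_le_left _ _
            linarith
          have hrq : (0:ℚ) < r := by exact_mod_cast hrpos
          have h1 : f α ≤ f r := fanti r hrpos α hr2
          rw [frat r hrq] at h1
          have : (r:ℝ) * f 1 ≤ α * f 1 + ε := by
            have hd2 : α - (r:ℝ) < δ := by linarith
            have : δ ≤ ε / (-(f 1)) := min_le_right _ _
            have h4 : (α - (r:ℝ)) * (-(f 1)) < ε := by
              calc (α - (r:ℝ)) * (-(f 1)) < δ * (-(f 1)) := by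
                    apply mul_lt_mul_of_pos_right hd2 hnf1
                _ ≤ (ε / (-(f 1))) * (-(f 1)) := by
                    apply mul_le_mul_of_nonneg_right this hnf1.le
                _ = ε := div_mul_cancel₀ ε hnf1.ne'
            nlinarith
          linarith
        · refine le_of_forall_pos_le_add fun ε hε => ?_
          obtain ⟨s, hs1, hs2⟩ := exists_rat_btwn
            (show α < α + ε / (-(f 1)) by linarith [div_pos hε hnf1])
          have hspos : (0:ℝ) < (s:ℝ) := by linarith
          have hsq : (0:ℚ) < s := by exact_mod_cast hspos
          have h1 : f s ≤ f α := fanti α hα s hs1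
          rw [frat s hsq] at h1
          have : α * f 1 ≤ (s:ℝ) * f 1 + ε := by
            have h4 : ((s:ℝ) - α) * (-(f 1)) < ε := by
              calc ((s:ℝ) - α) * (-(f 1)) < (ε / (-(f 1))) * (-(f 1)) := by
                    apply mul_lt_mul_of_pos_right (by linarith) hnf1
                _ = ε := div_mul_cancel₀ ε hnf1.ne'
            nlinarith
          linarith
    refine ⟨h 1, (hpos 1 one_pos).le, hle 1 one_pos, fun α hα => ?_⟩
    have := flin α hα
    rw [Real.rpow_def_of_pos (hpos 1 one_pos)]
    rw [hf] at this
    have : Real.exp (Real.log (h α)) = Real.exp (α * f 1) := by rw [← this]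
    rw [Real.exp_log (hpos α hα)] at this
    rw [this, hf]
    ring_nf

lemma ratio_norm_le_one (g : ℝ → ℂ) (hg : MemLp g 2 volume) (α : ℝ) (hα : 0 < α)
    (L : ℂ) (hL : Tendsto (fun x => g (x + α) / g x) atTop (nhds L)) : ‖L‖ ≤ 1 := by
  by_contra hc
  push_neg at hc
  set c : ℝ := (1 + ‖L‖) / 2 with hcdef
  have hc1 : 1 < c := by simp only [hcdef]; linarith
  have hc2 : c < ‖L‖ := by simp only [hcdef]; linarith
  have hev : ∀ᶠ x in atTop, c < ‖g (x + α) / g x‖ :=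
    (hL.norm).eventually_const_lt hc2
  obtain ⟨Y, hY⟩ := eventually_atTop.mp hev
  have hkey : ∀ x, Y ≤ x → g x ≠ 0 ∧ c * ‖g x‖ ≤ ‖g (x + α)‖ := by
    intro x hx
    have h := hY x hx
    have hgx : g x ≠ 0 := by
      intro h0
      rw [h0, div_zero, norm_zero] at h
      linarith
    refine ⟨hgx, ?_⟩
    rw [norm_div] at h
    have hpos : 0 < ‖g x‖ := norm_pos_iff.mpr hgx
    rw [lt_div_iff₀ hpos] at h
    linarith
  set φ : ℝ → ℝ := fun x => ‖g x‖ ^ 2 with hφdef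
  have hφint : Integrable φ volume := by
    have := hg.integrable_norm_rpow (by norm_num) (by norm_num)
    refine this.congr (Filter.Eventually.of_forall fun x => ?_)
    simp only [hφdef]
    have h2 : (2 : ENNReal).toReal = ((2:ℕ):ℝ) := by norm_num
    rw [h2, Real.rpow_natCast]
  have hφnn : ∀ x, 0 ≤ φ x := fun x => by positivity
  have hφshift : Integrable (fun x => φ (x + α)) volume := hφint.comp_add_right α
  set J : ℕ → ℝ := fun n => ∫ x in (Y + n * α)..(Y + (n + 1) * α), φ x with hJdef
  set B : ℝ := ∫ x, φ x with hBdef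
  have hJle : ∀ n, J n ≤ B := by
    intro n
    have hle : Y + (n:ℝ) * α ≤ Y + ((n:ℝ) + 1) * α := by nlinarith
    rw [hJdef]
    simp only
    rw [intervalIntegral.integral_of_le hle]
    exact setIntegral_le_integral hφint (Filter.Eventually.of_forall hφnn)
  have hgrow : ∀ n : ℕ, c ^ 2 * J n ≤ J (n + 1) := by
    intro n
    have hle : Y + (n:ℝ) * α ≤ Y + ((n:ℝ) + 1) * α := by nlinarith
    have hshift : J (n + 1) = ∫ x in (Y + n * α)..(Y + (n + 1) * α), φ (x + α) := by
      rw [hJdef]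
      simp only
      rw [intervalIntegral.integral_comp_add_right φ α]
      congr 1 <;> push_cast <;> ring
    have hmono : ∫ x in (Y + n * α)..(Y + (n + 1) * α), c ^ 2 * φ x ≤
        ∫ x in (Y + n * α)..(Y + (n + 1) * α), φ (x + α) := by
      apply intervalIntegral.integral_mono_on hle
      · exact ((hφint.const_mul _).intervalIntegrable)
      · exact hφshift.intervalIntegrable
      · intro x hx
        have hxY : Y ≤ x := by
          have := hx.1
          nlinarith [hx.1, mul_nonneg (Nat.cast_nonneg n) hα.le]
        obtain ⟨_, hcb⟩ := hkey x hxY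
        have h2 : (c * ‖g x‖) ^ 2 ≤ ‖g (x + α)‖ ^ 2 := by
          apply pow_le_pow_left₀ (by positivity) hcb
        simpa [hφdef, mul_pow] using h2
    rw [hshift]
    calc c ^ 2 * J n = ∫ x in (Y + n * α)..(Y + (n + 1) * α), c ^ 2 * φ x := by
          rw [hJdef]; simp only; rw [intervalIntegral.integral_const_mul]
      _ ≤ _ := hmono
  have hJ0 : 0 < J 0 := by
    rw [hJdef]
    simp only [Nat.cast_zero, zero_mul, add_zero, zero_add, one_mul]
    apply intervalIntegral.intervalIntegral_pos_of_pos_on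
    · exact hφint.intervalIntegrable
    · intro x hx
      have : g x ≠ 0 := (hkey x hx.1.le).1
      simp only [hφdef]
      exact pow_pos (norm_pos_iff.mpr this) 2
    · linarith
  have hgeom : ∀ n : ℕ, (c ^ 2) ^ n * J 0 ≤ J n := by
    intro n
    induction n with
    | zero => simp
    | succ k ih =>
      calc (c ^ 2) ^ (k + 1) * J 0 = c ^ 2 * ((c ^ 2) ^ k * J 0) := by ring
        _ ≤ c ^ 2 * J k := by
            apply mul_le_mul_of_nonneg_left ih (by positivity)
        _ ≤ J (k + 1) := hgrow k
  obtain ⟨n, hn⟩ := pow_unbounded_of_one_lt (B / J 0) (y := c ^ 2) (by nlinarith)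
  have : B < (c ^ 2) ^ n * J 0 := by
    rw [div_lt_iff₀ hJ0] at hn
    linarith
  linarith [hgeom n, hJle n]

theorem ratio_limit_norm_exponential (g : ℝ → ℂ) (hg : MemLp g 2 volume)
    (l : ℝ → ℂ)
    (hl : ∀ α > 0, Tendsto (fun x => g (x + α) / g x) atTop (nhds (l α))) :
    ∃ a : ℝ, 0 ≤ a ∧ a ≤ 1 ∧ ∀ α > 0, ‖l α‖ = a ^ α := by
  by_cases hA : ∀ X : ℝ, ∃ x, X ≤ x ∧ g x = 0
  · -- zeros of g are unbounded: all limits are 0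
    refine ⟨0, le_refl 0, zero_le_one, fun α hα => ?_⟩
    have hfreq : ∃ᶠ x in atTop, (fun x => g (x + α) / g x) x ∈ ({0} : Set ℂ) := by
      rw [Filter.frequently_atTop]
      intro a
      obtain ⟨x, hx, hx0⟩ := hA a
      exact ⟨x, hx, by simp [hx0]⟩
    have := mem_closure_of_frequently_of_tendsto hfreq (hl α hα)
    rw [closure_singleton, Set.mem_singleton_iff] at this
    rw [this, norm_zero, Real.zero_rpow (ne_of_gt hα)]
  · push_neg at hA
    obtain ⟨X, hX⟩ := hA
    have hX' : ∀ x, X ≤ x → g x ≠ 0 := hX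
    -- multiplicativity
    have lmul : ∀ α > 0, ∀ β > 0, l (α + β) = l β * l α := by
      intro α hα β hβ
      have hshift : Tendsto (fun x : ℝ => x + α) atTop atTop :=
        tendsto_atTop_add_const_right atTop α tendsto_id
      have T1 : Tendsto (fun x => g (x + α + β) / g (x + α)) atTop (nhds (l β)) :=
        (hl β hβ).comp hshift
      have T2 : Tendsto (fun x => g (x + α + β) / g (x + α) * (g (x + α) / g x))
          atTop (nhds (l β * l α)) := T1.mul (hl α hα)
      have heq : ∀ᶠ x in atTop,
          g (x + α + β) / g (x + α) * (g (x + α) / g x) = g (x + (α + β)) / g x := by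
        filter_upwards [eventually_ge_atTop X] with x hx
        have h1 : g (x + α) ≠ 0 := hX' (x + α) (by linarith)
        have h0 : g x ≠ 0 := hX' x hx
        have harg : x + (α + β) = x + α + β := by ring
        rw [harg]
        field_simp
      have T3 : Tendsto (fun x => g (x + (α + β)) / g x) atTop (nhds (l β * l α)) :=
        T2.congr' heq
      exact tendsto_nhds_unique (hl (α + β) (by linarith)) T3
    -- apply the functional equation lemma to h = ‖l ·‖
    have := funeq_aux (fun α => ‖l α‖)
      (fun α hα β hβ => by
        show ‖l (α + β)‖ = ‖l α‖ * ‖l β‖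
        rw [lmul α hα β hβ, norm_mul, mul_comm])
      (fun α _ => norm_nonneg _)
      (fun α hα => ratio_norm_le_one g hg α hα (l α) (hl α hα))
    simpa using this
end

section
/- Let g : ℝ → ℂ be a function that is eventually differentiable and nonvanishing (on some half-line (A, ∞)), and suppose the logarithmic derivative g'(x)/g(x) tends to a finite limit l ∈ ℂ as x → ∞. Then for every α > 0, g(x+α)/g(x) → e^{lα} as x → ∞. -/
open Filter

lemma ratio_key (g g' : ℝ → ℂ) (A : ℝ)
    (hdiff : ∀ x > A, HasDerivAt g (g' x) x)
    (hne : ∀ x > A, g x ≠ 0)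
    (l : ℂ) (α ε : ℝ) (hα : 0 < α) (hε : 0 < ε) (x : ℝ) (hx : A < x)
    (hb : ∀ t ∈ Set.Icc x (x + α), ‖g' t / g t - l‖ ≤ ε) :
    ‖g (x + α) / g x * Complex.exp (-(l * α)) - 1‖ ≤ ε * α * Real.exp (ε * α) := by
  set ψ : ℝ → ℂ := fun t => g t * Complex.exp (-(l * t)) with hψdef
  set φ : ℝ → ℂ := fun t => (g' t - l * g t) * Complex.exp (-(l * t)) with hφdef
  have hmem : ∀ t ∈ Set.Icc x (x + α), A < t := fun t ht => lt_of_lt_of_le hx ht.1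
  have hd : ∀ t ∈ Set.Icc x (x + α), HasDerivAt ψ (φ t) t := by
    intro t ht
    have h1 : HasDerivAt (fun s : ℝ => Complex.exp (-(l * s)))
        (-l * Complex.exp (-(l * t))) t := by
      have hofReal : HasDerivAt (fun s : ℝ => (s : ℂ)) 1 t := by
        simpa using (hasDerivAt_id t).ofReal_comp
      have := (((hofReal.const_mul l).neg).cexp)
      simpa [mul_comm] using this
    have := ((hdiff t (hmem t ht)).mul h1)
    convert this using 1
    · rfl
    · rfl
    simp only [hφdef]
    ring
  have hψne : ∀ t, A < t → ψ t ≠ 0 := fun t ht =>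
    mul_ne_zero (hne t ht) (Complex.exp_ne_zero _)
  have hbound : ∀ t ∈ Set.Icc x (x + α), ‖φ t‖ ≤ ε * ‖ψ t‖ := by
    intro t ht
    have hgt := hne t (hmem t ht)
    have heq : g' t - l * g t = (g' t / g t - l) * g t := by
      field_simp
    have : ‖φ t‖ = ‖g' t / g t - l‖ * (‖g t‖ * ‖Complex.exp (-(l * t))‖) := by
      simp only [hφdef, heq, norm_mul]; ring
    rw [this]
    have : ‖ψ t‖ = ‖g t‖ * ‖Complex.exp (-(l * t))‖ := by simp [hψdef, norm_mul]
    rw [this]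
    exact mul_le_mul_of_nonneg_right (hb t ht) (by positivity)
  -- Gronwall
  have hcont : ContinuousOn ψ (Set.Icc x (x + α)) :=
    fun t ht => ((hd t ht).continuousAt).continuousWithinAt
  have hgron : ∀ t ∈ Set.Icc x (x + α), ‖ψ t‖ ≤ ‖ψ x‖ * Real.exp (ε * (t - x)) := by
    intro t ht
    have := norm_le_gronwallBound_of_norm_deriv_right_le (f := ψ) (f' := φ)
      (δ := ‖ψ x‖) (K := ε) (ε := 0) (a := x) (b := x + α) hcont
      (fun s hs => ((hd s (Set.Ico_subset_Icc_self hs)).hasDerivWithinAt))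
      le_rfl
      (fun s hs => by
        simpa using hbound s (Set.Ico_subset_Icc_self hs))
      t ht
    rwa [gronwallBound_ε0] at this
  have hC : ∀ t ∈ Set.Ico x (x + α), ‖φ t‖ ≤ ε * (‖ψ x‖ * Real.exp (ε * α)) := by
    intro t ht
    have h1 := hbound t (Set.Ico_subset_Icc_self ht)
    have h2 := hgron t (Set.Ico_subset_Icc_self ht)
    have h3 : Real.exp (ε * (t - x)) ≤ Real.exp (ε * α) := by
      apply Real.exp_le_exp.2
      have : t - x ≤ α := by linarith [ht.2]
      nlinarith
    calc ‖φ t‖ ≤ ε * ‖ψ t‖ := h1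
      _ ≤ ε * (‖ψ x‖ * Real.exp (ε * α)) := by
          apply mul_le_mul_of_nonneg_left _ hε.le
          calc ‖ψ t‖ ≤ ‖ψ x‖ * Real.exp (ε * (t - x)) := h2
            _ ≤ ‖ψ x‖ * Real.exp (ε * α) :=
                mul_le_mul_of_nonneg_left h3 (norm_nonneg _)
  have hmvt := norm_image_sub_le_of_norm_deriv_le_segment'
    (f := ψ) (f' := φ) (a := x) (b := x + α)
    (fun t ht => (hd t ht).hasDerivWithinAt) hC (x + α)
    (Set.right_mem_Icc.2 (by linarith))
  -- hmvt : ‖ψ (x+α) - ψ x‖ ≤ ε * (‖ψ x‖ * exp(εα)) * α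
  have hψx := hψne x hx
  have hratio : g (x + α) / g x * Complex.exp (-(l * α)) - 1
      = (ψ (x + α) - ψ x) / ψ x := by
    have hgx := hne x hx
    have hexp : Complex.exp (-(l * ((x : ℂ) + α)))
        = Complex.exp (-(l * x)) * Complex.exp (-(l * α)) := by
      rw [← Complex.exp_add]; ring_nf
    field_simp [hψdef]
    simp only [hψdef]
    push_cast
    rw [hexp]
    ring
  rw [hratio]
  rw [norm_div]
  rw [div_le_iff₀ (norm_pos_iff.2 hψx)]
  calc ‖ψ (x + α) - ψ x‖ ≤ ε * (‖ψ x‖ * Real.exp (ε * α)) * (x + α - x) := hmvt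
    _ = ε * α * Real.exp (ε * α) * ‖ψ x‖ := by ring

theorem ratio_limit_of_log_derivative_limit (g g' : ℝ → ℂ) (A : ℝ)
    (hdiff : ∀ x > A, HasDerivAt g (g' x) x)
    (hne : ∀ x > A, g x ≠ 0)
    (l : ℂ)
    (hl : Tendsto (fun x => g' x / g x) atTop (nhds l)) :
    ∀ α > 0,
      Tendsto (fun x => g (x + α) / g x) atTop (nhds (Complex.exp (l * α))) := by
  intro α hα
  have h1 : Tendsto (fun x => g (x + α) / g x * Complex.exp (-(l * α))) atTop (nhds 1) := by
    rw [Metric.tendsto_nhds]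
    intro ε' hε'
    set ε : ℝ := min 1 (ε' / (2 * α * Real.exp α)) with hεdef
    have hεpos : 0 < ε := lt_min one_pos (by positivity)
    have hball := Metric.tendsto_nhds.mp hl ε hεpos
    obtain ⟨B, hB⟩ := eventually_atTop.mp hball
    filter_upwards [eventually_ge_atTop (max B (A + 1))] with x hx
    have hxB : B ≤ x := le_trans (le_max_left _ _) hx
    have hxA : A < x := lt_of_lt_of_le (by linarith [le_max_right B (A + 1)]) le_rfl
    have hxA' : A < x := by
      have := le_trans (le_max_right B (A + 1)) hx; linarith
    have hb : ∀ t ∈ Set.Icc x (x + α), ‖g' t / g t - l‖ ≤ ε := by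
      intro t ht
      have := hB t (le_trans hxB ht.1)
      rw [dist_eq_norm] at this
      exact this.le
    have hkey := ratio_key g g' A hdiff hne l α ε hα hεpos x hxA' hb
    rw [dist_eq_norm]
    calc ‖g (x + α) / g x * Complex.exp (-(l * α)) - 1‖
        ≤ ε * α * Real.exp (ε * α) := hkey
      _ ≤ ε * α * Real.exp α := by
          apply mul_le_mul_of_nonneg_left _ (by positivity)
          apply Real.exp_le_exp.2
          have h1 : ε ≤ 1 := min_le_left _ _
          nlinarith
      _ ≤ (ε' / (2 * α * Real.exp α)) * α * Real.exp α := by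
          have h2 : ε ≤ ε' / (2 * α * Real.exp α) := min_le_right _ _
          gcongr
      _ = ε' / 2 := by
          field_simp
      _ < ε' := by linarith
  have h2 := h1.mul_const (Complex.exp (l * α))
  have heq : (fun x => g (x + α) / g x * Complex.exp (-(l * α)) * Complex.exp (l * α))
      = fun x => g (x + α) / g x := by
    funext x
    rw [mul_assoc, ← Complex.exp_add]
    simp
  rw [heq, one_mul] at h2
  exact h2
end

section
/- Let g : ℝ → ℝ be a function that is eventually differentiable and eventually positive, and suppose the logarithmic derivative g'(x)/g(x) tends to −∞ as x → ∞. Then for every α > 0, g(x+α)/g(x) → 0 as x → ∞. -/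
open Filter

theorem ratio_limit_zero_of_log_derivative_atBot (g g' : ℝ → ℝ) (A : ℝ)
    (hdiff : ∀ x > A, HasDerivAt g (g' x) x)
    (hpos : ∀ x > A, 0 < g x)
    (hl : Tendsto (fun x => g' x / g x) atTop atBot) :
    ∀ α > 0, Tendsto (fun x => g (x + α) / g x) atTop (nhds 0) := by
  intro α hα
  have key : Tendsto (fun x => Real.log (g (x + α)) - Real.log (g x)) atTop atBot := by
    rw [tendsto_atBot]
    intro b
    obtain ⟨B, hB⟩ := eventually_atTop.mp (tendsto_atBot.mp hl (b / α))
    filter_upwards [eventually_ge_atTop (max B (A + 1))] with x hx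
    have hxB : B ≤ x := le_trans (le_max_left _ _) hx
    have hxA : A < x := lt_of_lt_of_le (by linarith [le_max_right B (A + 1)]) le_rfl
    have hA : A < x := by
      have := le_trans (le_max_right B (A + 1)) hx
      linarith
    have hmem : ∀ y ∈ Set.Icc x (x + α), A < y := by
      intro y hy
      linarith [hy.1]
    have hderiv : ∀ y ∈ Set.Ioo x (x + α),
        HasDerivAt (fun z => Real.log (g z)) (g' y / g y) y := by
      intro y hy
      have hAy : A < y := by linarith [hy.1]
      exact (hdiff y hAy).log (ne_of_gt (hpos y hAy))
    have hcont : ContinuousOn (fun z => Real.log (g z)) (Set.Icc x (x + α)) := by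
      intro y hy
      have hAy : A < y := hmem y hy
      exact (((hdiff y hAy).log (ne_of_gt (hpos y hAy))).continuousAt).continuousWithinAt
    obtain ⟨c, hc, hceq⟩ := exists_hasDerivAt_eq_slope (fun z => Real.log (g z))
      (fun z => g' z / g z) (by linarith : x < x + α) hcont hderiv
    have hcB : B ≤ c := le_of_lt (lt_of_le_of_lt hxB hc.1)
    have hcle : g' c / g c ≤ b / α := hB c hcB
    have : Real.log (g (x + α)) - Real.log (g x) = α * (g' c / g c) := by
      rw [hceq]
      rw [show x + α - x = α by ring]
      field_simp
    rw [this]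
    calc α * (g' c / g c) ≤ α * (b / α) := by
          exact mul_le_mul_of_nonneg_left hcle (le_of_lt hα)
      _ = b := by field_simp
  have := Real.tendsto_exp_atBot.comp key
  apply this.congr'
  filter_upwards [eventually_gt_atTop A] with x hx
  have h1 : 0 < g x := hpos x hx
  have h2 : 0 < g (x + α) := hpos (x + α) (by linarith)
  simp only [Function.comp_apply, Real.exp_sub, Real.exp_log h1, Real.exp_log h2]
end

section
/- Let g : ℝ → ℂ be measurable with e^{tx} g(x) ∈ L¹(ℝ) for all t > 0, and suppose g is not zero almost everywhere. Let α₁, …, α_N > 0, c₁, …, c_N ∈ ℂ, and β₁, …, β_N ∈ ℝ. Then it is impossible that g(x) = ∑_{k=1}^N c_k e^{2πi β_k x} g(x + α_k) for almost every x ∈ ℝ. -/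
open MeasureTheory Real

theorem hrt_exponential_decay_first_shift (g : ℝ → ℂ) (hg : Measurable g)
    (hint : ∀ t > 0, Integrable (fun x => (Real.exp (t * x) : ℂ) * g x) volume)
    (hgne : ¬ g =ᵐ[volume] 0)
    (N : ℕ) (hN : 0 < N) (α : Fin N → ℝ) (hα : ∀ k, 0 < α k)
    (c : Fin N → ℂ) (β : Fin N → ℝ) :
    ¬ (∀ᵐ x ∂volume,
        g x = ∑ k, c k * Complex.exp (2 * π * Complex.I * (β k) * x) *
          g (x + α k)) := by
  intro heq
  haveI : Nonempty (Fin N) := ⟨⟨0, hN⟩⟩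
  set M : ℝ := ∑ k, ‖c k‖ with hM
  have hM0 : 0 ≤ M := Finset.sum_nonneg fun k _ => norm_nonneg _
  set α₀ : ℝ := Finset.univ.inf' Finset.univ_nonempty α with hα₀def
  have hα₀le : ∀ k, α₀ ≤ α k := fun k => Finset.inf'_le _ (Finset.mem_univ k)
  have hα₀ : 0 < α₀ := by
    rw [hα₀def]
    exact (Finset.lt_inf'_iff _).2 fun k _ => hα k
  have hlog : 0 ≤ Real.log (M + 1) := Real.log_nonneg (by linarith)
  set t : ℝ := (Real.log (M + 1) + 1) / α₀ with ht_def
  have ht : 0 < t := div_pos (by linarith) hα₀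
  -- integrability of exp(t x)‖g x‖
  have hnorm : ∀ x : ℝ, ‖(Real.exp (t * x) : ℂ) * g x‖ = Real.exp (t * x) * ‖g x‖ := by
    intro x
    rw [norm_mul, Complex.norm_real, Real.norm_eq_abs, abs_of_nonneg (Real.exp_nonneg _)]
  have hint' : Integrable (fun x => Real.exp (t * x) * ‖g x‖) volume := by
    have := (hint t ht).norm
    simpa only [hnorm] using this
  have hintk : ∀ k : Fin N,
      Integrable (fun x => Real.exp (t * (x + α k)) * ‖g (x + α k)‖) volume :=
    fun k => hint'.comp_add_right (α k)
  have hintRHS : Integrable (fun x => ∑ k, ‖c k‖ * Real.exp (-(t * α k)) *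
      (Real.exp (t * (x + α k)) * ‖g (x + α k)‖)) volume :=
    integrable_finset_sum _ fun k _ => ((hintk k).const_mul _)
  -- pointwise a.e. inequality
  have hle : ∀ᵐ x ∂volume, Real.exp (t * x) * ‖g x‖ ≤
      ∑ k, ‖c k‖ * Real.exp (-(t * α k)) *
        (Real.exp (t * (x + α k)) * ‖g (x + α k)‖) := by
    filter_upwards [heq] with x hx
    have h1 : ‖g x‖ ≤ ∑ k, ‖c k‖ * ‖g (x + α k)‖ := by
      rw [hx]
      refine (norm_sum_le _ _).trans (Finset.sum_le_sum fun k _ => ?_)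
      rw [norm_mul, norm_mul]
      have : ‖Complex.exp (2 * π * Complex.I * (β k) * x)‖ = 1 := by
        rw [Complex.norm_exp]
        simp [Complex.ext_iff, Complex.exp_re]
      rw [this]
      ring_nf
      exact le_refl _
    calc Real.exp (t * x) * ‖g x‖
        ≤ Real.exp (t * x) * ∑ k, ‖c k‖ * ‖g (x + α k)‖ := by
          exact mul_le_mul_of_nonneg_left h1 (Real.exp_nonneg _)
      _ = ∑ k, ‖c k‖ * Real.exp (-(t * α k)) *
            (Real.exp (t * (x + α k)) * ‖g (x + α k)‖) := by
          rw [Finset.mul_sum]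
          refine Finset.sum_congr rfl fun k _ => ?_
          have hexp : Real.exp (t * x) = Real.exp (-(t * α k)) * Real.exp (t * (x + α k)) := by
            rw [← Real.exp_add]; ring_nf
          rw [hexp]; ring
  -- integrate
  set F : ℝ := ∫ x, Real.exp (t * x) * ‖g x‖ with hF
  have hF0 : 0 ≤ F := integral_nonneg fun x => mul_nonneg (Real.exp_nonneg _) (norm_nonneg _)
  have hFle : F ≤ M * Real.exp (-(t * α₀)) * F := by
    have h2 : F ≤ ∑ k, ‖c k‖ * Real.exp (-(t * α k)) * F := by
      have := integral_mono_ae hint' hintRHS hle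
      rw [integral_finset_sum _ (fun k _ => (hintk k).const_mul _)] at this
      refine this.trans_eq (Finset.sum_congr rfl fun k _ => ?_)
      rw [integral_const_mul]
      congr 1
      exact integral_add_right_eq_self (fun y => Real.exp (t * y) * ‖g y‖) (α k)
    refine h2.trans ?_
    rw [hM, Finset.sum_mul, Finset.sum_mul]
    refine Finset.sum_le_sum fun k _ => ?_
    have : Real.exp (-(t * α k)) ≤ Real.exp (-(t * α₀)) := by
      apply Real.exp_le_exp.2
      have := hα₀le k
      nlinarith
    exact mul_le_mul_of_nonneg_right (mul_le_mul_of_nonneg_left this (norm_nonneg _)) hF0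
  have hq : M * Real.exp (-(t * α₀)) < 1 := by
    have htα : t * α₀ = Real.log (M + 1) + 1 := div_mul_cancel₀ _ (ne_of_gt hα₀)
    rw [htα, neg_add, Real.exp_add, Real.exp_neg, Real.exp_log (by linarith : (0:ℝ) < M + 1)]
    have he1 : (1:ℝ) ≤ Real.exp 1 := by linarith [Real.add_one_le_exp (1:ℝ)]
    have h3 : Real.exp (-1) ≤ 1 := by
      rw [Real.exp_neg]
      exact inv_le_one_of_one_le₀ he1
    have h4 : M * (M+1)⁻¹ < 1 := by
      rw [mul_inv_lt_iff₀ (by linarith)]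
      linarith
    calc M * ((M+1)⁻¹ * Real.exp (-1)) = (M * (M+1)⁻¹) * Real.exp (-1) := by ring
      _ ≤ (M * (M+1)⁻¹) * 1 := by
          exact mul_le_mul_of_nonneg_left h3 (by positivity)
      _ < 1 := by linarith
  have hFzero : F = 0 := by nlinarith
  -- conclude g = 0 a.e.
  have hzero : (fun x => Real.exp (t * x) * ‖g x‖) =ᵐ[volume] 0 := by
    rw [← integral_eq_zero_iff_of_nonneg
      (fun x => mul_nonneg (Real.exp_nonneg _) (norm_nonneg _)) hint']
    exact hFzero
  apply hgne
  filter_upwards [hzero] with x hx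
  have : Real.exp (t * x) * ‖g x‖ = 0 := hx
  have hgx : ‖g x‖ = 0 := by
    rcases mul_eq_zero.1 this with h | h
    · exact absurd h (Real.exp_ne_zero _)
    · exact h
  simpa using hgx
end

section
/- Let g : ℝ → ℂ be measurable with e^{tx} g(x) ∈ L¹(ℝ) for all t > 0 and g not zero a.e. If there exist α₁, …, α_N > 0, c₁, …, c_N ∈ ℂ, β₁, …, β_N ∈ ℝ with g(x) = ∑_{k=1}^N c_k e^{2πiβ_k x} g(x+α_k) a.e., then for every t > 0 we have 1 ≤ ∑_{k=1}^N |c_k| e^{−t α_k}. -/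
open MeasureTheory Real

theorem hrt_exponential_decay_coefficient_bound (g : ℝ → ℂ) (hg : Measurable g)
    (hint : ∀ t > 0, Integrable (fun x => (Real.exp (t * x) : ℂ) * g x) volume)
    (hgne : ¬ g =ᵐ[volume] 0)
    (N : ℕ) (hN : 0 < N) (α : Fin N → ℝ) (hα : ∀ k, 0 < α k)
    (c : Fin N → ℂ) (β : Fin N → ℝ)
    (hdep : ∀ᵐ x ∂volume,
        g x = ∑ k, c k * Complex.exp (2 * π * Complex.I * (β k) * x) *
          g (x + α k)) :
    ∀ t > 0, 1 ≤ ∑ k, ‖c k‖ * Real.exp (-t * α k) := by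
  intro t ht
  set h : ℝ → ℝ := fun x => Real.exp (t * x) * ‖g x‖ with hh
  have hi : Integrable h volume := by
    have := (hint t ht).norm
    refine this.congr ?_
    filter_upwards with x
    simp only [hh, norm_mul, Complex.norm_real, Real.norm_eq_abs,
      abs_of_pos (Real.exp_pos _)]
  have hnonneg : ∀ x, 0 ≤ h x := fun x => mul_nonneg (Real.exp_pos _).le (norm_nonneg _)
  set F : ℝ := ∫ x, h x with hF
  have hFpos : 0 < F := by
    rcases lt_or_eq_of_le (integral_nonneg (f := h) hnonneg) with h1 | h1
    · exact h1
    · exfalso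
      have h0 : h =ᵐ[volume] 0 := (integral_eq_zero_iff_of_nonneg (f := h) hnonneg hi).mp h1.symm
      apply hgne
      filter_upwards [h0] with x hx
      have hx' : Real.exp (t * x) * ‖g x‖ = 0 := hx
      rcases mul_eq_zero.mp hx' with h2 | h2
      · exact absurd h2 (Real.exp_pos _).ne'
      · simpa using h2
  have hik : ∀ k : Fin N, Integrable (fun x => Real.exp (t * x) * ‖g (x + α k)‖) volume := by
    intro k
    have h1 : Integrable (fun x => h (x + α k)) volume := hi.comp_add_right (α k)
    have h2 := h1.const_mul (Real.exp (-t * α k))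
    refine h2.congr ?_
    filter_upwards with x
    simp only [hh]
    rw [← mul_assoc, ← Real.exp_add]
    ring_nf
  have hbound : ∀ᵐ x ∂volume,
      h x ≤ ∑ k, ‖c k‖ * (Real.exp (t * x) * ‖g (x + α k)‖) := by
    filter_upwards [hdep] with x hx
    have hgle : ‖g x‖ ≤ ∑ k, ‖c k‖ * ‖g (x + α k)‖ := by
      rw [hx]
      refine (norm_sum_le _ _).trans ?_
      apply Finset.sum_le_sum
      intro k _
      rw [norm_mul, norm_mul]
      have h1 : ‖Complex.exp (2 * π * Complex.I * (β k) * x)‖ = 1 := by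
        rw [Complex.norm_exp]
        have : (2 * (π : ℂ) * Complex.I * (β k) * x).re = 0 := by simp
        rw [this, Real.exp_zero]
      rw [h1, mul_one]
    calc h x = Real.exp (t * x) * ‖g x‖ := rfl
      _ ≤ Real.exp (t * x) * ∑ k, ‖c k‖ * ‖g (x + α k)‖ :=
          mul_le_mul_of_nonneg_left hgle (Real.exp_pos _).le
      _ = ∑ k, ‖c k‖ * (Real.exp (t * x) * ‖g (x + α k)‖) := by
          rw [Finset.mul_sum]; congr 1; ext k; ring
  have hint2 : Integrable (fun x => ∑ k, ‖c k‖ * (Real.exp (t * x) * ‖g (x + α k)‖)) volume :=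
    integrable_finset_sum _ (fun k _ => (hik k).const_mul _)
  have hineq : F ≤ (∑ k, ‖c k‖ * Real.exp (-t * α k)) * F := by
    have hmono := integral_mono_ae hi hint2 hbound
    rw [integral_finset_sum _ (fun k _ => (hik k).const_mul _)] at hmono
    rw [Finset.sum_mul]
    refine hmono.trans_eq ?_
    apply Finset.sum_congr rfl
    intro k _
    rw [integral_const_mul]
    have hshift : ∫ x, Real.exp (t * x) * ‖g (x + α k)‖ = Real.exp (-t * α k) * F := by
      have h1 : ∀ x : ℝ, Real.exp (t * x) * ‖g (x + α k)‖
          = Real.exp (-t * α k) * h (x + α k) := by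
        intro x
        simp only [hh]
        rw [← mul_assoc, ← Real.exp_add]
        ring_nf
      simp only [h1]
      rw [integral_const_mul, integral_add_right_eq_self]
    rw [hshift]; ring
  nlinarith [hineq, hFpos]
end

section
/- Let {β₁, …, β_N} ⊆ ℝ be linearly independent over ℚ and let θ₁, …, θ_N ∈ ℝ. For every U > 0 and ε > 0 there exist integers p₁, …, p_N and a real u > U such that |β_k u − p_k − θ_k| < ε for every k = 1, …, N; consequently |e^{2πi β_k u} − e^{2πi θ_k}| < 4πε for every k. -/
open Real Finset Filter Topology intervalIntegral

lemma cos_pow_expand (n : ℕ) (t : ℝ) :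
    ((Real.cos (π * t) : ℝ) : ℂ) ^ (2*n) =
      ∑ j ∈ Finset.range (2*n+1),
        ((2*n).choose j : ℂ) / 4^n * Complex.exp (2*π*Complex.I*((j:ℝ)-n)*t) := by
  rw [Complex.ofReal_cos]
  rw [Complex.cos]
  rw [div_pow, add_pow]
  rw [Finset.sum_div]
  refine Finset.sum_congr rfl fun j hj => ?_
  have hj' : j ≤ 2*n := Nat.lt_succ_iff.mp (Finset.mem_range.mp hj)
  rw [← Complex.exp_nat_mul, ← Complex.exp_nat_mul, ← Complex.exp_add]
  have h2 : ((2:ℂ))^(2*n) = 4^n := by rw [pow_mul]; norm_num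
  rw [h2]
  have : (j:ℂ) * (((π * t : ℝ):ℂ) * Complex.I) + ((2*n - j : ℕ):ℂ) * (-((π*t:ℝ):ℂ) * Complex.I)
      = 2*(π:ℝ)*Complex.I*(((j:ℝ):ℂ)-((n:ℝ):ℂ))*t := by
    push_cast [Nat.cast_sub hj']
    ring
  rw [this]
  push_cast
  ring

lemma f_expand (N n : ℕ) (β θ : Fin N → ℝ) (u : ℝ) :
    ((∏ k, Real.cos (π * (β k * u - θ k)) ^ (2*n) : ℝ) : ℂ)
    = ∑ p ∈ Fintype.piFinset (fun _ : Fin N => Finset.range (2*n+1)),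
        ((∏ k, ((2*n).choose (p k) : ℂ) / 4^n) *
          Complex.exp (-(2*π*Complex.I) * ((∑ k, ((p k : ℝ)-n) * θ k : ℝ) : ℂ)))
          * Complex.exp (2*π*Complex.I * ((∑ k, ((p k : ℝ)-n) * β k : ℝ) : ℂ) * u) := by
  rw [Complex.ofReal_prod]
  simp only [Complex.ofReal_pow]
  have : ∀ k : Fin N, ((Real.cos (π * (β k * u - θ k)) : ℝ) : ℂ) ^ (2*n) =
      ∑ j ∈ Finset.range (2*n+1),
        ((2*n).choose j : ℂ) / 4^n * Complex.exp (2*π*Complex.I*((j:ℝ)-n)*(β k * u - θ k)) := by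
    intro k; rw [cos_pow_expand n (β k * u - θ k)]; push_cast; ring_nf
  rw [Finset.prod_congr rfl (fun k _ => this k)]
  rw [Finset.prod_univ_sum]
  refine Finset.sum_congr rfl fun p hp => ?_
  rw [Finset.prod_mul_distrib, ← Complex.exp_sum]
  conv_rhs => rw [mul_assoc, ← Complex.exp_add]
  congr 1
  push_cast
  congr 1
  rw [Finset.mul_sum, Finset.mul_sum, Finset.sum_mul, ← Finset.sum_add_distrib]
  exact Finset.sum_congr rfl fun k _ => by ring

lemma term_tendsto (a : ℝ) :
    Tendsto (fun T : ℝ => (∫ u in (0:ℝ)..T, Complex.exp (2*π*Complex.I*(a:ℂ)*(u:ℂ))) / T)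
      atTop (𝓝 (if a = 0 then 1 else 0)) := by
  by_cases ha : a = 0
  · simp only [ha, if_pos rfl, Complex.ofReal_zero, mul_zero, zero_mul, Complex.exp_zero]
    have : ∀ᶠ T : ℝ in atTop, (1:ℂ) = (∫ u in (0:ℝ)..T, (1:ℂ)) / T := by
      filter_upwards [eventually_gt_atTop (0:ℝ)] with T hT
      rw [intervalIntegral.integral_const]
      simp [hT.ne']
    exact Tendsto.congr' this tendsto_const_nhds
  · rw [if_neg ha]
    have hc : (2*π*Complex.I*(a:ℂ)) ≠ 0 := by
      simp [Complex.ext_iff, pi_ne_zero, ha]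
    have key : ∀ T : ℝ, (∫ u in (0:ℝ)..T, Complex.exp (2*π*Complex.I*(a:ℂ)*(u:ℂ)))
        = (Complex.exp (2*π*Complex.I*(a:ℂ)*(T:ℂ)) - 1) / (2*π*Complex.I*(a:ℂ)) := by
      intro T
      rw [integral_exp_mul_complex hc]
      simp
    simp only [key]
    apply squeeze_zero_norm (a := fun T : ℝ => (2 / ‖(2*π*Complex.I*(a:ℂ))‖) * |T|⁻¹)
    · intro T
      rw [norm_div, norm_div, Complex.norm_real, Real.norm_eq_abs, div_div, div_eq_mul_inv,
        mul_inv, ← mul_assoc, div_eq_mul_inv]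
      gcongr
      have h1 : ‖Complex.exp (2*π*Complex.I*(a:ℂ)*(T:ℂ))‖ = 1 := by
        rw [Complex.norm_exp]
        simp
      calc ‖Complex.exp (2*π*Complex.I*(a:ℂ)*(T:ℂ)) - 1‖
          ≤ ‖Complex.exp (2*π*Complex.I*(a:ℂ)*(T:ℂ))‖ + ‖(1:ℂ)‖ := norm_sub_le _ _
        _ = 2 := by rw [h1]; simp; norm_num
    · have h1 : Tendsto (fun T : ℝ => |T|⁻¹) atTop (𝓝 0) :=
        tendsto_inv_atTop_zero.comp tendsto_abs_atTop_atTop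
      simpa using h1.const_mul (2 / ‖(2*π*Complex.I*(a:ℂ))‖)

lemma avg_tendsto (N n : ℕ) (β θ : Fin N → ℝ) (hβ : LinearIndependent ℚ β) :
    Tendsto (fun T : ℝ => (∫ u in (0:ℝ)..T, ∏ k, Real.cos (π * (β k * u - θ k)) ^ (2*n)) / T)
      atTop (𝓝 ((((2*n).choose n : ℝ) / 4^n)^N)) := by
  set S := Fintype.piFinset (fun _ : Fin N => Finset.range (2*n+1)) with hS
  set lam : (Fin N → ℕ) → ℝ := fun p => ∑ k, ((p k : ℝ)-(n:ℝ)) * β k with hlam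
  set c : (Fin N → ℕ) → ℂ := fun p => (∏ k, ((2*n).choose (p k) : ℂ) / 4^n) *
      Complex.exp (-(2*π*Complex.I) * ((∑ k, ((p k : ℝ)-(n:ℝ)) * θ k : ℝ) : ℂ)) with hc
  -- step 1: complex integral identity
  have h1 : ∀ T : ℝ, ((∫ u in (0:ℝ)..T, ∏ k, Real.cos (π * (β k * u - θ k)) ^ (2*n)) / T : ℂ)
      = ∑ p ∈ S, c p * ((∫ u in (0:ℝ)..T, Complex.exp (2*π*Complex.I*((lam p : ℝ):ℂ)*(u:ℂ))) / T) := by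
    intro T
    have hint : ∀ p ∈ S, IntervalIntegrable
        (fun u : ℝ => c p * Complex.exp (2*π*Complex.I*((lam p : ℝ):ℂ)*(u:ℂ)))
        MeasureTheory.volume 0 T := by
      intro p _
      apply Continuous.intervalIntegrable
      fun_prop
    have : (∫ u in (0:ℝ)..T, (((∏ k, Real.cos (π * (β k * u - θ k)) ^ (2*n) : ℝ)) : ℂ))
        = ∑ p ∈ S, c p * ∫ u in (0:ℝ)..T, Complex.exp (2*π*Complex.I*((lam p : ℝ):ℂ)*(u:ℂ)) := by
      rw [intervalIntegral.integral_congr (g := fun u => ∑ p ∈ S, c p *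
          Complex.exp (2*π*Complex.I*((lam p : ℝ):ℂ)*(u:ℂ)))
          (fun u _ => f_expand N n β θ u)]
      rw [intervalIntegral.integral_finset_sum hint]
      exact Finset.sum_congr rfl fun p _ => intervalIntegral.integral_const_mul _ _
    rw [← intervalIntegral.integral_ofReal, this, Finset.sum_div]
    exact Finset.sum_congr rfl fun p _ => (mul_div_assoc _ _ _)
  -- step 2: complex limit
  have h2 : Tendsto (fun T : ℝ => ((∫ u in (0:ℝ)..T,
        ∏ k, Real.cos (π * (β k * u - θ k)) ^ (2*n)) / T : ℂ)) atTop
      (𝓝 (∑ p ∈ S, c p * (if lam p = 0 then 1 else 0))) := by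
    simp only [h1]
    exact tendsto_finset_sum _ fun p _ => (term_tendsto (lam p)).const_mul (c p)
  -- step 3: evaluate the limit
  have p₀mem : (fun _ : Fin N => n) ∈ S := by
    simp [hS, Fintype.mem_piFinset]
    omega
  have h3 : (∑ p ∈ S, c p * (if lam p = 0 then 1 else 0))
      = (((((2*n).choose n : ℝ) / 4^n)^N : ℝ) : ℂ) := by
    rw [Finset.sum_eq_single_of_mem (fun _ : Fin N => n) p₀mem]
    · have hl0 : lam (fun _ : Fin N => n) = 0 := by simp [hlam]
      rw [if_pos hl0, hc]
      simp only []
      push_cast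
      rw [Finset.prod_const]
      simp [Finset.card_univ]
    · intro b hb hne
      have : lam b ≠ 0 := by
        intro h0
        apply hne
        have hli := Fintype.linearIndependent_iff.mp hβ (fun i => ((b i : ℚ) - n))
        have hsum : ∑ i, (((b i : ℚ) - n) : ℚ) • β i = 0 := by
          rw [← h0, hlam]
          refine Finset.sum_congr rfl fun i _ => ?_
          rw [Rat.smul_def]
          push_cast
          ring
        have := hli hsum
        funext i
        have hi := this i
        have : ((b i : ℚ)) = (n : ℚ) := by linarith [hi]
        exact_mod_cast this
      rw [if_neg this, mul_zero]
  rw [h3] at h2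
  have := (Complex.continuous_re.tendsto _).comp h2
  simpa [Function.comp_def, ← Complex.ofReal_div, ← Complex.ofReal_pow] using this

lemma cos_pow_bound {ε t : ℝ} (hε : 0 < ε) (hε2 : ε ≤ 1/2)
    (h : ε ≤ |t - round t|) (n : ℕ) :
    Real.cos (π * t) ^ (2*n) ≤ (Real.cos (π * ε) ^ 2) ^ n := by
  have habs : |t - round t| ≤ 1/2 := abs_sub_round t
  set r : ℤ := round t
  have hsq : Real.cos (π * t) ^ 2 = Real.cos (π * (t - r)) ^ 2 := by
    have : π * t = π * (t - r) + r * π := by ring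
    rw [this, Real.cos_add_int_mul_pi]
    rw [mul_pow]
    have h1 : ((-1:ℝ)^(r:ℤ))^2 = 1 := by
      rcases Int.even_or_odd r with h|h
      · rw [h.neg_one_zpow]; norm_num
      · rw [Odd.neg_one_zpow h]; norm_num
    rw [h1, one_mul]
  have hsq2 : Real.cos (π * (t - r)) ^ 2 = Real.cos (π * |t - r|) ^ 2 := by
    rcases abs_cases (t - r) with ⟨h1, _⟩ | ⟨h1, _⟩
    · rw [h1]
    · rw [h1, mul_neg, Real.cos_neg]
  have hmono : Real.cos (π * |t - (r:ℝ)|) ≤ Real.cos (π * ε) := by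
    apply Real.cos_le_cos_of_nonneg_of_le_pi
    · positivity
    · nlinarith [pi_pos]
    · nlinarith [pi_pos]
  have hnn : 0 ≤ Real.cos (π * |t - (r:ℝ)|) := by
    apply Real.cos_nonneg_of_mem_Icc
    constructor
    · nlinarith [pi_pos, abs_nonneg (t - (r:ℝ))]
    · nlinarith [pi_pos]
  calc Real.cos (π * t) ^ (2*n) = (Real.cos (π * t) ^ 2)^n := by rw [← pow_mul]
    _ = (Real.cos (π * |t - (r:ℝ)|) ^ 2)^n := by rw [hsq, hsq2]
    _ ≤ (Real.cos (π * ε) ^ 2) ^ n := by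
        apply pow_le_pow_left₀ (by positivity)
        apply pow_le_pow_left₀ hnn hmono

lemma key_exists (N : ℕ) (β : Fin N → ℝ) (hβ : LinearIndependent ℚ β) (θ : Fin N → ℝ)
    (U : ℝ) (ε : ℝ) (hε : 0 < ε) (hε2 : ε ≤ 1/2) (hU : 0 < U) :
    ∃ (p : Fin N → ℤ) (u : ℝ), U < u ∧ ∀ k, |β k * u - p k - θ k| < ε := by
  -- the bad-set density ρ
  set ρ : ℝ := Real.cos (π * ε) ^ 2 with hρ
  have hρ0 : 0 ≤ ρ := sq_nonneg _
  have hρ1 : ρ < 1 := by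
    have h1 : Real.cos (π * ε) < 1 := by
      have := Real.cos_lt_cos_of_nonneg_of_le_pi (le_refl 0) (by nlinarith [pi_pos] : π * ε ≤ π)
        (by positivity)
      simpa using this
    have hc0 : 0 ≤ Real.cos (π * ε) := by
      apply Real.cos_nonneg_of_mem_Icc
      constructor <;> nlinarith [pi_pos]
    nlinarith [hρ]
  -- choose n
  obtain ⟨n, hn1, hn2⟩ : ∃ n : ℕ, 1 ≤ n ∧ (2*n:ℝ)^N * ρ^n < 1 := by
    have h := tendsto_pow_const_mul_const_pow_of_lt_one N hρ0 hρ1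
    have h2 : Tendsto (fun n : ℕ => (2:ℝ)^N * ((n:ℝ)^N * ρ^n)) atTop (𝓝 0) := by
      simpa using h.const_mul ((2:ℝ)^N)
    have h3 := (h2.eventually (eventually_lt_nhds one_pos)).and (eventually_ge_atTop 1)
    obtain ⟨n, hn⟩ := h3.exists
    exact ⟨n, hn.2, by calc (2*n:ℝ)^N * ρ^n = (2:ℝ)^N * ((n:ℝ)^N * ρ^n) := by ring
                      _ < 1 := hn.1⟩
  set μ : ℝ := (((2*n).choose n : ℝ) / 4^n)^N with hμ
  have hchoose : (1:ℝ)/(2*n) ≤ ((2*n).choose n : ℝ) / 4^n := by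
    have h4 := Nat.four_pow_le_two_mul_self_mul_centralBinom n hn1
    rw [Nat.centralBinom] at h4
    have h4' : (4:ℝ)^n ≤ 2*n * ((2*n).choose n : ℝ) := by exact_mod_cast h4
    rw [div_le_div_iff₀ (by positivity) (by positivity)]
    nlinarith [pow_pos (show (0:ℝ) < 4 by norm_num) n]
  have hμρ : ρ^n < μ := by
    have h5 : ((1:ℝ)/(2*n))^N ≤ μ := by
      apply pow_le_pow_left₀ (by positivity) hchoose
    have h6 : ρ^n < ((1:ℝ)/(2*n))^N := by
      rw [div_pow, one_pow, lt_div_iff₀ (by positivity)]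
      calc ρ^n * (2*n:ℝ)^N = (2*n:ℝ)^N * ρ^n := by ring
        _ < 1 := hn2
    linarith
  -- by contradiction
  by_contra hcon
  push_neg at hcon
  -- every u > U is "bad": some coordinate is ε-far from every integer shift
  have hbad : ∀ u : ℝ, U < u → ∃ k, ε ≤ |(β k * u - θ k) - round (β k * u - θ k)| := by
    intro u hu
    obtain ⟨k, hk⟩ := hcon (fun k => round (β k * u - θ k)) u hu
    refine ⟨k, ?_⟩
    calc ε ≤ |β k * u - ↑(round (β k * u - θ k)) - θ k| := hk
      _ = |(β k * u - θ k) - round (β k * u - θ k)| := by congr 1; ring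
  -- hence f u ≤ ρ^n for u > U
  set f : ℝ → ℝ := fun u => ∏ k, Real.cos (π * (β k * u - θ k)) ^ (2*n) with hf
  have hf01 : ∀ u, 0 ≤ f u ∧ f u ≤ 1 := by
    intro u
    constructor
    · apply Finset.prod_nonneg; intro k _; rw [pow_mul]; positivity
    · apply Finset.prod_le_one
      · intro k _; rw [pow_mul]; positivity
      · intro k _; rw [pow_mul]
        apply pow_le_one₀ (by positivity)
        exact Real.cos_sq_le_one _
  have hfbad : ∀ u : ℝ, U < u → f u ≤ ρ^n := by
    intro u hu
    obtain ⟨k, hk⟩ := hbad u hu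
    calc f u ≤ ∏ j, (if j = k then ρ^n else 1) := by
          apply Finset.prod_le_prod
          · intro j _; rw [pow_mul]; positivity
          · intro j _
            by_cases hj : j = k
            · rw [if_pos hj, hj]
              exact cos_pow_bound hε hε2 hk n
            · rw [if_neg hj, pow_mul]
              apply pow_le_one₀ (by positivity)
              exact Real.cos_sq_le_one _
      _ = ρ^n := by simp
  -- integral bound for T ≥ U
  have hfc : Continuous f := by
    apply continuous_finset_prod
    intro k _
    fun_prop
  have hint : ∀ a b : ℝ, IntervalIntegrable f MeasureTheory.volume a b :=
    fun a b => hfc.intervalIntegrable a b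
  have hbound : ∀ T : ℝ, U ≤ T → (∫ u in (0:ℝ)..T, f u) / T ≤ U/T + ρ^n := by
    intro T hT
    have hT0 : 0 < T := lt_of_lt_of_le hU hT
    have hsplit : (∫ u in (0:ℝ)..T, f u)
        = (∫ u in (0:ℝ)..U, f u) + ∫ u in U..T, f u :=
      (intervalIntegral.integral_add_adjacent_intervals (hint 0 U) (hint U T)).symm
    have h1 : (∫ u in (0:ℝ)..U, f u) ≤ U := by
      calc (∫ u in (0:ℝ)..U, f u) ≤ ∫ _ in (0:ℝ)..U, (1:ℝ) := by
            apply intervalIntegral.integral_mono_on hU.le (hint 0 U)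
              intervalIntegrable_const
            intro x _; exact (hf01 x).2
        _ = U := by simp
    have h2 : (∫ u in U..T, f u) ≤ ρ^n * (T - U) := by
      have hae : ∀ᵐ x ∂(MeasureTheory.volume.restrict (Set.Icc U T)), f x ≤ ρ^n := by
        have hne : ∀ᵐ x ∂(MeasureTheory.volume.restrict (Set.Icc U T)), x ≠ U := by
          refine MeasureTheory.ae_restrict_of_ae ?_
          rw [MeasureTheory.ae_iff]
          simpa using Real.volume_singleton
        filter_upwards [hne, MeasureTheory.ae_restrict_mem measurableSet_Icc] with x hx1 hx2
        exact hfbad x (lt_of_le_of_ne hx2.1 (Ne.symm hx1))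
      calc (∫ u in U..T, f u) ≤ ∫ _ in U..T, ρ^n := by
            apply intervalIntegral.integral_mono_ae_restrict hT (hint U T)
              intervalIntegrable_const
            exact hae
        _ = ρ^n * (T - U) := by simp [mul_comm]
    rw [div_le_iff₀ hT0]
    have hρn : 0 ≤ ρ^n := pow_nonneg hρ0 n
    have hUT : U/T * T = U := div_mul_cancel₀ U hT0.ne'
    nlinarith [hsplit, h1, h2]
  -- limit contradiction
  have havg := avg_tendsto N n β θ hβ
  rw [← hf, ← hμ] at havg
  have hδ : (0:ℝ) < (μ - ρ^n)/2 := by linarith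
  have hev1 : ∀ᶠ T : ℝ in atTop, ρ^n + (μ - ρ^n)/2 < (∫ u in (0:ℝ)..T, f u) / T :=
    havg.eventually (eventually_gt_nhds (by linarith))
  have hev2 : ∀ᶠ T : ℝ in atTop, U/T < (μ - ρ^n)/2 := by
    have : Tendsto (fun T : ℝ => U/T) atTop (𝓝 0) := by
      simpa [div_eq_mul_inv] using tendsto_inv_atTop_zero.const_mul U
    exact this.eventually (eventually_lt_nhds hδ)
  obtain ⟨T, hT1, hT2, hT3⟩ := (hev1.and (hev2.and (eventually_ge_atTop U))).exists
  have := hbound T hT3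
  linarith

lemma norm_exp_mul_I_sub_one_le (x : ℝ) : ‖Complex.exp ((x:ℂ) * Complex.I) - 1‖ ≤ |x| := by
  have h : Complex.exp ((x:ℂ) * Complex.I) - 1
      = ((Real.cos x - 1 : ℝ) : ℂ) + ((Real.sin x : ℝ) : ℂ) * Complex.I := by
    rw [Complex.exp_mul_I, ← Complex.ofReal_cos, ← Complex.ofReal_sin]
    push_cast
    ring
  rw [h]
  have h2 : ‖((Real.cos x - 1 : ℝ) : ℂ) + ((Real.sin x : ℝ) : ℂ) * Complex.I‖^2
      = (Real.cos x - 1)^2 + (Real.sin x)^2 := by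
    rw [Complex.sq_norm, Complex.normSq_add_mul_I]
  have h3 : (Real.cos x - 1)^2 + (Real.sin x)^2 ≤ x^2 := by
    have := Real.sin_sq_add_cos_sq x
    have := Real.one_sub_sq_div_two_le_cos (x := x)
    nlinarith
  have h4 : ‖((Real.cos x - 1 : ℝ) : ℂ) + ((Real.sin x : ℝ) : ℂ) * Complex.I‖^2 ≤ |x|^2 := by
    rw [h2, sq_abs]; exact h3
  exact (pow_le_pow_iff_left₀ (norm_nonneg _) (abs_nonneg _) two_ne_zero).mp h4

theorem kronecker_approximation (N : ℕ) (β : Fin N → ℝ)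
    (hβ : LinearIndependent ℚ β) (θ : Fin N → ℝ) :
    ∀ U > 0, ∀ ε > 0, ∃ (p : Fin N → ℤ) (u : ℝ), U < u ∧
      (∀ k, |β k * u - p k - θ k| < ε) ∧
      (∀ k, ‖Complex.exp (2 * π * Complex.I * (β k) * u) -
        Complex.exp (2 * π * Complex.I * (θ k))‖ < 4 * π * ε) := by
  intro U hU ε hε
  have hε' : 0 < min ε (1/2) := lt_min hε one_half_pos
  obtain ⟨p, u, hu, hp⟩ := key_exists N β hβ θ U (min ε (1/2)) hε' (min_le_right _ _) hU
  have hpε : ∀ k, |β k * u - p k - θ k| < ε :=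
    fun k => lt_of_lt_of_le (hp k) (min_le_left _ _)
  refine ⟨p, u, hu, hpε, fun k => ?_⟩
  set δ : ℝ := β k * u - p k - θ k with hδ
  have h1 : Complex.exp (2 * π * Complex.I * (β k) * u)
      = Complex.exp (2 * π * Complex.I * (θ k)) * Complex.exp (((2*π*δ : ℝ):ℂ) * Complex.I) := by
    rw [← Complex.exp_add]
    have : 2 * (π:ℂ) * Complex.I * (θ k : ℂ) + ((2*π*δ : ℝ):ℂ) * Complex.I
        = 2 * (π:ℂ) * Complex.I * (β k : ℂ) * (u : ℂ) + (-(p k) : ℤ) * (2 * π * Complex.I) := by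
      push_cast [hδ]
      ring
    rw [this, Complex.exp_add, Complex.exp_int_mul_two_pi_mul_I, mul_one]
  rw [h1]
  have h2 : ‖Complex.exp (2 * π * Complex.I * (θ k : ℂ))‖ = 1 := by
    rw [Complex.norm_exp]
    simp
  calc ‖Complex.exp (2 * π * Complex.I * (θ k:ℂ)) * Complex.exp (((2*π*δ : ℝ):ℂ) * Complex.I)
        - Complex.exp (2 * π * Complex.I * (θ k:ℂ))‖
      = ‖Complex.exp (2 * π * Complex.I * (θ k:ℂ))‖ * ‖Complex.exp (((2*π*δ : ℝ):ℂ) * Complex.I) - 1‖ := by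
        rw [← norm_mul]
        congr 1
        ring
    _ = ‖Complex.exp (((2*π*δ : ℝ):ℂ) * Complex.I) - 1‖ := by rw [h2, one_mul]
    _ ≤ |2*π*δ| := norm_exp_mul_I_sub_one_le _
    _ = 2*π*|δ| := by rw [abs_mul, abs_of_nonneg (by positivity : (0:ℝ) ≤ 2*π)]
    _ < 4 * π * ε := by
        have := hpε k
        rw [← hδ] at this
        nlinarith [pi_pos, abs_nonneg δ]
end
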